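/- Let θ, b ∈ ℝ with θ > 0 and b > 0, and set t = cosh θ. (i) Suppose s is a complex-analytic function on an open neighborhood of b with s(b) = e^{θ}, s′(b) a positive real number, and (s(w)² − 2t·s(w) + 1)·s′(w) = s(w)·(w² − b²) near b; then s′(b)/√(s(b)) = √(b/sinh θ). (ii) Suppose σ is a complex-analytic function on an open neighborhood of −b with σ(−b) = e^{−θ}, σ′(−b) a positive real number, and (σ(w)² − 2t·σ(w) + 1)·σ′(w) = σ(w)·(w² − b²) near −b; then σ′(−b)/√(σ(−b)) = √(b/sinh θ). In particular the two values coincide. -/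

import Mathlib

open Complex

/-- Key derivative computation: differentiating the ODE at a point where the
quadratic factor vanishes. -/
lemma aux_deriv_eq (t : ℝ) (b : ℝ) (w₀ : ℝ) (U : Set ℂ) (hU : IsOpen U)
    (hw : (w₀ : ℂ) ∈ U)
    (s : ℂ → ℂ) (hs : DifferentiableOn ℂ s U)
    (hode : ∀ w ∈ U,
      (s w ^ 2 - 2 * (t : ℂ) * s w + 1) * deriv s w = s w * (w ^ 2 - (b : ℂ) ^ 2))
    (hzero : s (w₀ : ℂ) ^ 2 - 2 * (t : ℂ) * s (w₀ : ℂ) + 1 = 0)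
    (hsq : ((w₀ : ℂ)) ^ 2 = (b : ℂ) ^ 2) :
    (2 * s (w₀ : ℂ) - 2 * (t : ℂ)) * (deriv s (w₀ : ℂ)) ^ 2
      = s (w₀ : ℂ) * (2 * (w₀ : ℂ)) := by
  have hmem : U ∈ nhds (w₀ : ℂ) := hU.mem_nhds hw
  have hda : DifferentiableAt ℂ s (w₀ : ℂ) := hs.differentiableAt hmem
  have h1 : HasDerivAt s (deriv s (w₀ : ℂ)) (w₀ : ℂ) := hda.hasDerivAt
  have hds : AnalyticOnNhd ℂ (deriv s) U := (hs.analyticOnNhd hU).deriv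
  have hda2 : DifferentiableAt ℂ (deriv s) (w₀ : ℂ) :=
    (hds (w₀ : ℂ) hw).differentiableAt
  have h2 : HasDerivAt (deriv s) (deriv (deriv s) (w₀ : ℂ)) (w₀ : ℂ) := hda2.hasDerivAt
  set c := deriv s (w₀ : ℂ) with hc
  set d := deriv (deriv s) (w₀ : ℂ) with hd
  -- LHS function
  have hF : HasDerivAt (fun w => (s w ^ 2 - 2 * (t : ℂ) * s w + 1) * deriv s w)
      ((2 * s (w₀ : ℂ) * c - 2 * (t : ℂ) * c) * c
        + (s (w₀ : ℂ) ^ 2 - 2 * (t : ℂ) * s (w₀ : ℂ) + 1) * d) (w₀ : ℂ) := by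
    have hq : HasDerivAt (fun w => s w ^ 2 - 2 * (t : ℂ) * s w + 1)
        (2 * s (w₀ : ℂ) * c - 2 * (t : ℂ) * c) (w₀ : ℂ) := by
      have := (((h1.pow 2).sub ((h1.const_mul (2 * (t : ℂ))))).add_const 1)
      refine this.congr_deriv ?_
      norm_num
    exact hq.mul h2
  have hG : HasDerivAt (fun w => s w * (w ^ 2 - (b : ℂ) ^ 2))
      (c * ((w₀ : ℂ) ^ 2 - (b : ℂ) ^ 2) + s (w₀ : ℂ) * (2 * (w₀ : ℂ))) (w₀ : ℂ) := by
    have hp : HasDerivAt (fun w : ℂ => w ^ 2 - (b : ℂ) ^ 2) (2 * (w₀ : ℂ)) (w₀ : ℂ) := by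
      have := ((hasDerivAt_pow 2 ((w₀ : ℂ))).sub_const ((b : ℂ) ^ 2))
      refine this.congr_deriv ?_
      norm_num
    exact h1.mul hp
  have heq : (fun w => (s w ^ 2 - 2 * (t : ℂ) * s w + 1) * deriv s w)
      =ᶠ[nhds (w₀ : ℂ)] (fun w => s w * (w ^ 2 - (b : ℂ) ^ 2)) :=
    Filter.eventuallyEq_of_mem hmem (fun w hwU => hode w hwU)
  have hF' : HasDerivAt (fun w => s w * (w ^ 2 - (b : ℂ) ^ 2))
      ((2 * s (w₀ : ℂ) * c - 2 * (t : ℂ) * c) * c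
        + (s (w₀ : ℂ) ^ 2 - 2 * (t : ℂ) * s (w₀ : ℂ) + 1) * d) (w₀ : ℂ) :=
    hF.congr_of_eventuallyEq heq.symm
  have := hF'.unique hG
  rw [hzero, hsq] at this
  have h0 : (2 * s (w₀ : ℂ) * c - 2 * (t : ℂ) * c) * c = s (w₀ : ℂ) * (2 * (w₀ : ℂ)) := by
    simpa using this
  calc (2 * s (w₀ : ℂ) - 2 * (t : ℂ)) * c ^ 2
      = (2 * s (w₀ : ℂ) * c - 2 * (t : ℂ) * c) * c := by ring
    _ = s (w₀ : ℂ) * (2 * (w₀ : ℂ)) := h0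

lemma sqrt_calc (θ b c e : ℝ) (hθ : 0 < θ) (hb : 0 < b) (hc : 0 < c) (he : 0 < e)
    (h : c ^ 2 = b * e / Real.sinh θ) :
    c / Real.sqrt e = Real.sqrt (b / Real.sinh θ) := by
  have hsinh : 0 < Real.sinh θ := Real.sinh_pos_iff.mpr hθ
  have hcs : c = Real.sqrt (b * e / Real.sinh θ) := by
    rw [← h, Real.sqrt_sq hc.le]
  have hnum : 0 ≤ b * e := by positivity
  have : Real.sqrt (b * e / Real.sinh θ) / Real.sqrt e
      = Real.sqrt (b * e / Real.sinh θ / e) := by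
    rw [Real.sqrt_div (by positivity) e]
  rw [hcs, this]
  congr 1
  field_simp

theorem leading_coefficients_coincide
    (θ b : ℝ) (hθ : 0 < θ) (hb : 0 < b)
    (t : ℝ) (ht : t = Real.cosh θ)
    (U : Set ℂ) (hU : IsOpen U) (hbU : (b : ℂ) ∈ U)
    (s : ℂ → ℂ) (hs : DifferentiableOn ℂ s U)
    (hsb : s (b : ℂ) = (Real.exp θ : ℂ))
    (hs'pos : ∃ c : ℝ, 0 < c ∧ deriv s (b : ℂ) = (c : ℂ))
    (hode : ∀ w ∈ U,
      (s w ^ 2 - 2 * (t : ℂ) * s w + 1) * deriv s w = s w * (w ^ 2 - (b : ℂ) ^ 2))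
    (V : Set ℂ) (hV : IsOpen V) (hbV : -(b : ℂ) ∈ V)
    (σ : ℂ → ℂ) (hσ : DifferentiableOn ℂ σ V)
    (hσb : σ (-(b : ℂ)) = (Real.exp (-θ) : ℂ))
    (hσ'pos : ∃ c : ℝ, 0 < c ∧ deriv σ (-(b : ℂ)) = (c : ℂ))
    (hode' : ∀ w ∈ V,
      (σ w ^ 2 - 2 * (t : ℂ) * σ w + 1) * deriv σ w = σ w * (w ^ 2 - (b : ℂ) ^ 2)) :
    deriv s (b : ℂ) / ((Real.sqrt (Real.exp θ) : ℝ) : ℂ) =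
      ((Real.sqrt (b / Real.sinh θ) : ℝ) : ℂ) ∧
    deriv σ (-(b : ℂ)) / ((Real.sqrt (Real.exp (-θ)) : ℝ) : ℂ) =
      ((Real.sqrt (b / Real.sinh θ) : ℝ) : ℂ) ∧
    deriv s (b : ℂ) / ((Real.sqrt (Real.exp θ) : ℝ) : ℂ) =
      deriv σ (-(b : ℂ)) / ((Real.sqrt (Real.exp (-θ)) : ℝ) : ℂ) := by
  obtain ⟨c, hc, hcd⟩ := hs'pos
  obtain ⟨c', hc', hcd'⟩ := hσ'pos
  have hsinh : 0 < Real.sinh θ := Real.sinh_pos_iff.mpr hθ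
  have hexp : (0:ℝ) < Real.exp θ := Real.exp_pos θ
  have hexp' : (0:ℝ) < Real.exp (-θ) := Real.exp_pos (-θ)
  have hee : Real.exp θ * Real.exp (-θ) = 1 := by
    rw [← Real.exp_add]; simp
  have hcoshr : 2 * t = Real.exp θ + Real.exp (-θ) := by
    rw [ht, Real.cosh_eq]; ring
  -- first saddle
  have hzero1 : s (b : ℂ) ^ 2 - 2 * (t : ℂ) * s (b : ℂ) + 1 = 0 := by
    rw [hsb]
    have : (Real.exp θ : ℝ) ^ 2 - 2 * t * Real.exp θ + 1 = 0 := by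
      have h2 : (2 * t) * Real.exp θ = (Real.exp θ + Real.exp (-θ)) * Real.exp θ := by
        rw [hcoshr]
      nlinarith [hee]
    calc ((Real.exp θ : ℂ)) ^ 2 - 2 * (t : ℂ) * (Real.exp θ : ℂ) + 1
        = (((Real.exp θ) ^ 2 - 2 * t * Real.exp θ + 1 : ℝ) : ℂ) := by push_cast; ring
      _ = 0 := by rw [this]; simp
  have key1 := aux_deriv_eq t b b U hU hbU s hs hode hzero1 rfl
  rw [hsb, hcd] at key1
  have key1r : (2 * Real.exp θ - 2 * t) * c ^ 2 = Real.exp θ * (2 * b) := by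
    have : (((2 * Real.exp θ - 2 * t) * c ^ 2 : ℝ) : ℂ)
        = ((Real.exp θ * (2 * b) : ℝ) : ℂ) := by push_cast; push_cast at key1; linear_combination key1
    exact_mod_cast this
  have hc2 : c ^ 2 = b * Real.exp θ / Real.sinh θ := by
    have hs2 : 2 * Real.exp θ - 2 * t = 2 * Real.sinh θ := by
      rw [hcoshr, Real.sinh_eq]; ring
    rw [hs2] at key1r
    field_simp
    linarith [key1r]
  have part1 : deriv s (b : ℂ) / ((Real.sqrt (Real.exp θ) : ℝ) : ℂ) =
      ((Real.sqrt (b / Real.sinh θ) : ℝ) : ℂ) := by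
    rw [hcd, ← sqrt_calc θ b c (Real.exp θ) hθ hb hc hexp hc2]
    push_cast
    ring
  -- second saddle
  have hnb : ((-b : ℝ) : ℂ) = -(b : ℂ) := by push_cast; ring
  have hbV' : ((-b : ℝ) : ℂ) ∈ V := by rw [hnb]; exact hbV
  have hσb' : σ (((-b : ℝ) : ℂ)) = (Real.exp (-θ) : ℂ) := by rw [hnb]; exact hσb
  have hcd'' : deriv σ (((-b : ℝ) : ℂ)) = (c' : ℂ) := by rw [hnb]; exact hcd'
  have hzero2 : σ (((-b : ℝ) : ℂ)) ^ 2 - 2 * (t : ℂ) * σ (((-b : ℝ) : ℂ)) + 1 = 0 := by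
    rw [hσb']
    have : (Real.exp (-θ) : ℝ) ^ 2 - 2 * t * Real.exp (-θ) + 1 = 0 := by
      have h2 : (2 * t) * Real.exp (-θ) = (Real.exp θ + Real.exp (-θ)) * Real.exp (-θ) := by
        rw [hcoshr]
      nlinarith [hee]
    calc ((Real.exp (-θ) : ℂ)) ^ 2 - 2 * (t : ℂ) * (Real.exp (-θ) : ℂ) + 1
        = (((Real.exp (-θ)) ^ 2 - 2 * t * Real.exp (-θ) + 1 : ℝ) : ℂ) := by push_cast; ring
      _ = 0 := by rw [this]; simp
  have hsq2 : (((-b : ℝ) : ℂ)) ^ 2 = (b : ℂ) ^ 2 := by push_cast; ring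
  have key2 := aux_deriv_eq t b (-b) V hV hbV' σ hσ hode' hzero2 hsq2
  rw [hσb', hcd''] at key2
  have key2r : (2 * Real.exp (-θ) - 2 * t) * c' ^ 2 = Real.exp (-θ) * (2 * (-b)) := by
    have : (((2 * Real.exp (-θ) - 2 * t) * c' ^ 2 : ℝ) : ℂ)
        = ((Real.exp (-θ) * (2 * (-b)) : ℝ) : ℂ) := by
      push_cast; push_cast at key2; linear_combination key2
    exact_mod_cast this
  have hc2' : c' ^ 2 = b * Real.exp (-θ) / Real.sinh θ := by
    have hs2 : 2 * Real.exp (-θ) - 2 * t = -(2 * Real.sinh θ) := by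
      rw [hcoshr, Real.sinh_eq]; ring
    rw [hs2] at key2r
    field_simp
    linarith [key2r]
  have part2 : deriv σ (-(b : ℂ)) / ((Real.sqrt (Real.exp (-θ)) : ℝ) : ℂ) =
      ((Real.sqrt (b / Real.sinh θ) : ℝ) : ℂ) := by
    rw [hcd', ← sqrt_calc θ b c' (Real.exp (-θ)) hθ hb hc' hexp' hc2']
    push_cast
    ring
  exact ⟨part1, part2, part1.trans part2.symm⟩
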